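/- Let η > 0 and let k_η(z) = (1/(4π) + η/(12π)) − (η/(8π))·√((1−z)/2). Then for each natural number ℓ, the quantity λ_ℓ(η) = 2π ∫_{-1}^{1} k_η(z) · P_ℓ(z) dz equals 1 when ℓ = 0, and equals η/((4ℓ²−1)(2ℓ+3)) when ℓ ≥ 1. In particular λ_ℓ(η) > 0 for all ℓ. (Eigenvalues of the Lebedev kernel.) -/

import Mathlib

/-- The `ℓ`-th Legendre polynomial (Rodrigues' formula), normalized so that `P_ℓ(1) = 1`. -/
noncomputable def legendreP (ℓ : ℕ) : Polynomial ℝ :=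
  ((1 : ℝ) / (2 ^ ℓ * ℓ.factorial)) • Polynomial.derivative^[ℓ] ((Polynomial.X ^ 2 - 1) ^ ℓ)

/-- The Lebedev univariate kernel function with parameter `η`. -/
noncomputable def lebedevKernelFun (η z : ℝ) : ℝ :=
  (1 / (4 * Real.pi) + η / (12 * Real.pi)) - (η / (8 * Real.pi)) * Real.sqrt ((1 - z) / 2)

open Polynomial


theorem lx (n : ℕ) (f : ℝ[X]) :
    derivative^[n] (X * f) = X * derivative^[n] f + (n : ℝ[X]) * derivative^[n-1] f := by
  induction n generalizing f with
  | zero => simpa using add_comm _ _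
  | succ n ih =>
    rw [Function.iterate_succ_apply, derivative_mul, derivative_X, one_mul,
      iterate_map_add, ih (derivative f), ← Function.iterate_succ_apply]
    cases n with
    | zero => simpa using add_comm _ _
    | succ m =>
      rw [show m + 1 - 1 = m from rfl, ← Function.iterate_succ_apply,
        show m + 1 + 1 - 1 = m + 1 from rfl]
      push_cast
      ring

theorem lq (n : ℕ) (f : ℝ[X]) :
    derivative^[n] ((X^2 - 1) * f) = (X^2 - 1) * derivative^[n] f
      + (2 * (n : ℝ[X])) * (X * derivative^[n-1] f)
      + ((n : ℝ[X]) * ((n : ℝ[X]) - 1)) * derivative^[n-2] f := by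
  cases n with
  | zero => simp
  | succ m =>
    rw [show ((X:ℝ[X])^2 - 1) * f = X * (X * f) - f by ring, iterate_map_sub, lx, lx,
      show m + 1 - 1 = m from rfl, lx, show m + 1 - 2 = m - 1 from rfl]
    push_cast
    ring

noncomputable def Rr (ℓ : ℕ) : ℝ[X] := (X ^ 2 - 1) ^ ℓ
noncomputable def Ar (ℓ : ℕ) : ℝ[X] := derivative^[ℓ] (Rr ℓ)

theorem dRr (ℓ : ℕ) : derivative (Rr (ℓ+1)) = (2*((ℓ:ℝ[X])+1)) * (X * Rr ℓ) := by
  rw [Rr, Rr, derivative_pow]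
  have : derivative ((X:ℝ[X])^2 - 1) = 2*X := by
    simp [derivative_X_pow, map_ofNat]; norm_num
  rw [this]
  simp only [map_add, map_one, C_eq_natCast]
  push_cast
  ring

theorem rr_dvd (ℓ k : ℕ) (h : k ≤ ℓ) : ∃ g, derivative^[k] (Rr ℓ) = (X^2-1)^(ℓ-k) * g := by
  induction k with
  | zero => exact ⟨1, by simp [Rr]⟩
  | succ k ih =>
    obtain ⟨g, hg⟩ := ih (le_trans (Nat.le_succ k) h)
    obtain ⟨j, hj⟩ : ∃ j, ℓ - k = j + 1 := ⟨ℓ - (k+1), by omega⟩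
    refine ⟨(2*((j:ℝ[X])+1)) * (X * g) + (X^2-1) * derivative g, ?_⟩
    rw [Function.iterate_succ_apply', hg, hj, derivative_mul, derivative_pow]
    have : derivative ((X:ℝ[X])^2 - 1) = 2*X := by
      simp [derivative_X_pow, map_ofNat]; norm_num
    rw [this, show ℓ - (k+1) = j by omega]
    simp only [map_add, map_one, C_eq_natCast]
    push_cast
    ring

theorem rr_eval (ℓ k : ℕ) (h : k < ℓ) (x : ℝ) (hx : x^2 = 1) :
    (derivative^[k] (Rr ℓ)).eval x = 0 := by
  obtain ⟨g, hg⟩ := rr_dvd ℓ k h.le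
  rw [hg]
  simp only [eval_mul, eval_pow, eval_sub, eval_one, eval_pow, eval_X, hx, sub_self]
  rw [zero_pow (by omega), zero_mul]

theorem dX2 : derivative ((X:ℝ[X])^2 - 1) = 2*X := by
  simp [derivative_X_pow, map_ofNat]; norm_num

theorem it_nat_mul (k : ℕ) (n : ℕ) (f : ℝ[X]) :
    derivative^[k] ((n:ℝ[X]) * f) = (n:ℝ[X]) * derivative^[k] f := by
  rw [← C_eq_natCast, iterate_derivative_C_mul, C_eq_natCast]

theorem dRrN (ℓ : ℕ) : derivative (Rr (ℓ+1)) = ((2*ℓ+2 : ℕ):ℝ[X]) * (X * Rr ℓ) := by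
  rw [dRr]; push_cast; ring

theorem recA (ℓ : ℕ) : Ar (ℓ+1)
    = ((2*ℓ+2:ℕ):ℝ[X]) * (X * Ar ℓ + (ℓ:ℝ[X]) * derivative^[ℓ-1] (Rr ℓ)) := by
  rw [Ar, Function.iterate_succ_apply, dRrN, it_nat_mul, lx, Ar]

theorem recB (ℓ : ℕ) : derivative (Ar (ℓ+1))
    = ((2*ℓ+2:ℕ):ℝ[X]) * (X * derivative (Ar ℓ) + ((ℓ+1:ℕ):ℝ[X]) * Ar ℓ) := by
  have h : derivative (Ar (ℓ+1)) = derivative^[ℓ+1] (derivative (Rr (ℓ+1))) := by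
    rw [Ar, ← Function.iterate_succ_apply' derivative, Function.iterate_succ_apply]
  rw [h, dRrN, it_nat_mul, lx, show ℓ+1-1 = ℓ from rfl,
    show derivative^[ℓ+1] (Rr ℓ) = derivative (Ar ℓ) from Function.iterate_succ_apply' _ _ _,
    show derivative^[ℓ] (Rr ℓ) = Ar ℓ from rfl]

theorem recC (ℓ : ℕ) : (X^2-1) * derivative (Ar ℓ)
    = ((ℓ*(ℓ+1):ℕ):ℝ[X]) * derivative^[ℓ-1] (Rr ℓ) := by
  match ℓ with
  | 0 => simp [Ar, Rr]
  | 1 =>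
    have : Ar 1 = 2*X := by rw [Ar, Rr, pow_one, Function.iterate_one, dX2]
    rw [this, Rr, pow_one]
    simp [map_ofNat]
    ring
  | (m+2) =>
    have base : ((X:ℝ[X])^2-1) * derivative (Rr (m+2)) = ((2*(m+1)+2:ℕ):ℝ[X]) * (X * Rr (m+2)) := by
      rw [dRrN, Rr, Rr, pow_succ]; ring
    have E := congrArg (derivative^[m+2]) base
    rw [lq, it_nat_mul, lx] at E
    rw [show m+2-1 = m+1 from rfl, show m+2-2 = m from rfl] at E
    rw [← Function.iterate_succ_apply derivative, ← Function.iterate_succ_apply derivative,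
      ← Function.iterate_succ_apply derivative] at E
    rw [Ar, ← Function.iterate_succ_apply' derivative]
    simp only [Nat.succ_eq_add_one, show m+1+1 = m+2 from rfl, show m+2+1 = m+3 from rfl,
      show m+2-1 = m+1 from rfl] at E ⊢
    push_cast at E ⊢
    linear_combination E

def cN (ℓ : ℕ) : ℕ := 2^ℓ * ℓ.factorial

theorem cN_pos (ℓ : ℕ) : 0 < cN ℓ := Nat.mul_pos (pow_pos (by norm_num) _) ℓ.factorial_pos

theorem cN_succ (ℓ : ℕ) : cN (ℓ+1) = (2*ℓ+2) * cN ℓ := by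
  rw [cN, cN, Nat.factorial_succ, pow_succ]; ring

theorem cN_ne (ℓ : ℕ) : ((cN ℓ : ℕ) : ℝ[X]) ≠ 0 := Nat.cast_ne_zero.mpr (cN_pos ℓ).ne'

theorem cN_neR (ℓ : ℕ) : ((cN ℓ : ℕ) : ℝ) ≠ 0 := Nat.cast_ne_zero.mpr (cN_pos ℓ).ne'

theorem dconst (n : ℕ) (f : ℝ[X]) :
    derivative ((n:ℝ[X]) * f) = (n:ℝ[X]) * derivative f := by
  simpa using it_nat_mul 1 n f

theorem hPA (ℓ : ℕ) : ((cN ℓ : ℕ) : ℝ[X]) * legendreP ℓ = Ar ℓ := by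
  rw [legendreP, smul_eq_C_mul, ← C_eq_natCast, ← mul_assoc, ← C_mul]
  have h1 : ((cN ℓ : ℕ) : ℝ) * ((1:ℝ)/(2 ^ ℓ * ℓ.factorial)) = 1 := by
    have h2 : ((ℓ.factorial : ℝ)) ≠ 0 := Nat.cast_ne_zero.2 ℓ.factorial_ne_zero
    rw [cN]; push_cast; field_simp
  rw [h1, C_1, one_mul, Ar, Rr]

theorem idB (ℓ : ℕ) : derivative (legendreP (ℓ+1))
    = X * derivative (legendreP ℓ) + ((ℓ+1:ℕ):ℝ[X]) * legendreP ℓ := by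
  have h := recB ℓ
  rw [← hPA (ℓ+1), ← hPA ℓ, dconst, dconst] at h
  refine mul_left_cancel₀ (cN_ne (ℓ+1)) ?_
  rw [h, cN_succ, Nat.cast_mul]
  ring

theorem idC' (ℓ : ℕ) : ((ℓ+1:ℕ):ℝ[X]) * legendreP (ℓ+1)
    = (X^2-1) * derivative (legendreP ℓ) + ((ℓ+1:ℕ):ℝ[X]) * (X * legendreP ℓ) := by
  have a := recA ℓ
  rw [← hPA (ℓ+1), ← hPA ℓ] at a
  have b := recC ℓ
  rw [← hPA ℓ, dconst] at b
  refine mul_left_cancel₀ (cN_ne (ℓ+1)) ?_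
  rw [cN_succ, Nat.cast_mul] at a ⊢
  push_cast at a b ⊢
  linear_combination ((ℓ:ℝ[X])+1) * a - (2*(ℓ:ℝ[X])+2) * b

theorem idC (ℓ : ℕ) : X * derivative (legendreP (ℓ+1))
    = derivative (legendreP ℓ) + ((ℓ+1:ℕ):ℝ[X]) * legendreP (ℓ+1) := by
  have b := idB ℓ
  have c := idC' ℓ
  push_cast at b c ⊢
  linear_combination X * b - c

theorem idE1 (m : ℕ) : derivative (legendreP (m+2))
    = derivative (legendreP m) + ((2*m+3:ℕ):ℝ[X]) * legendreP (m+1) := by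
  have b := idB (m+1)
  have c := idC m
  push_cast at b c ⊢
  linear_combination b + c

theorem idE2 (ℓ : ℕ) : (1 - X) * (derivative (legendreP (ℓ+1)) + derivative (legendreP ℓ))
    = ((ℓ+1:ℕ):ℝ[X]) * (legendreP ℓ - legendreP (ℓ+1)) := by
  have b := idB ℓ
  have c := idC ℓ
  push_cast at b c ⊢
  linear_combination b - c

theorem evalStep (ℓ : ℕ) (x : ℝ) (hx : x^2 = 1) :
    (legendreP (ℓ+1)).eval x = x * (legendreP ℓ).eval x := by
  have a := recA ℓ
  rw [← hPA (ℓ+1), ← hPA ℓ] at a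
  have a' := congrArg (eval x) a
  simp only [eval_mul, eval_add, eval_natCast, eval_X] at a'
  have hz : (ℓ:ℝ) * (derivative^[ℓ-1] (Rr ℓ)).eval x = 0 := by
    cases ℓ with
    | zero => simp
    | succ m => rw [show m+1-1 = m from rfl, rr_eval (m+1) m (by omega) x hx, mul_zero]
  refine mul_left_cancel₀ (cN_neR (ℓ+1)) ?_
  rw [a', cN_succ, Nat.cast_mul]
  push_cast
  linear_combination (2*(ℓ:ℝ)+2) * hz

theorem evalP1 (ℓ : ℕ) : (legendreP ℓ).eval 1 = 1 := by
  induction ℓ with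
  | zero => simp [legendreP]
  | succ m ih => rw [evalStep m 1 (by norm_num), ih, mul_one]

theorem evalPm1 (ℓ : ℕ) : (legendreP ℓ).eval (-1) = (-1)^ℓ := by
  induction ℓ with
  | zero => simp [legendreP]
  | succ m ih => rw [evalStep m (-1) (by norm_num), ih, pow_succ]; ring

noncomputable def qP (ℓ : ℕ) : ℝ[X] := (legendreP ℓ).comp (1 - 2*X^2)

theorem qP_eval1 (ℓ : ℕ) : (qP ℓ).eval 1 = (-1)^ℓ := by
  rw [qP, eval_comp]
  norm_num [evalPm1]

theorem qP_zero : qP 0 = 1 := by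
  simp [qP, legendreP]

theorem du : derivative ((1:ℝ[X]) - 2*X^2) = -(4*X) := by
  simp [derivative_X_pow, map_ofNat]
  ring

theorem dqP (ℓ : ℕ) : derivative (qP ℓ) = -(4*X) * (derivative (legendreP ℓ)).comp (1 - 2*X^2) := by
  rw [qP, derivative_comp, du]

theorem cid2 (ℓ : ℕ) : X * (derivative (qP (ℓ+1)) + derivative (qP ℓ))
    = ((2*ℓ+2:ℕ):ℝ[X]) * (qP (ℓ+1) - qP ℓ) := by
  have e := congrArg (fun p => p.comp (1 - 2*X^2)) (idE2 ℓ)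
  simp only [mul_comp, add_comp, sub_comp, one_comp, X_comp, natCast_comp] at e
  rw [dqP, dqP]
  push_cast at e ⊢
  rw [qP, qP]
  linear_combination (-2 : ℝ[X]) * e

theorem cid1 (m : ℕ) : derivative (qP (m+2))
    = derivative (qP m) - ((4*(2*m+3):ℕ):ℝ[X]) * (X * qP (m+1)) := by
  have e := congrArg (fun p => p.comp (1 - 2*X^2)) (idE1 m)
  simp only [mul_comp, add_comp, sub_comp, one_comp, X_comp, natCast_comp] at e
  rw [dqP, dqP]
  push_cast at e ⊢
  rw [qP]
  linear_combination (-(4:ℝ[X])*X) * e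

theorem pInt (p : ℝ[X]) (a b : ℝ) : IntervalIntegrable (fun x => p.eval x) MeasureTheory.volume a b :=
  p.continuous.intervalIntegrable a b

theorem pFTC (p : ℝ[X]) (a b : ℝ) :
    ∫ x in a..b, (derivative p).eval x = p.eval b - p.eval a := by
  exact intervalIntegral.integral_eq_sub_of_hasDerivAt (fun x _ => p.hasDerivAt x)
    (pInt (derivative p) a b)

theorem ibp (p : ℝ[X]) : ∫ t in (0:ℝ)..1, t * (derivative p).eval t
    = p.eval 1 - ∫ t in (0:ℝ)..1, p.eval t := by
  have key : ∀ t ∈ Set.uIcc (0:ℝ) 1, t * (derivative p).eval t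
      = (derivative (X*p)).eval t - p.eval t := by
    intro t _
    rw [derivative_mul, derivative_X]
    simp only [eval_add, eval_mul, eval_X, eval_one, one_mul]
    ring
  rw [intervalIntegral.integral_congr key, intervalIntegral.integral_sub
    (pInt (derivative (X*p)) 0 1) (pInt p 0 1), pFTC]
  simp

theorem intX2mul (p : ℝ[X]) (a b : ℝ) :
    IntervalIntegrable (fun t => t * p.eval t) MeasureTheory.volume a b :=
  (continuous_id.mul p.continuous).intervalIntegrable a b

theorem Mrec (ℓ : ℕ) : (2*(ℓ:ℝ)+3) * ∫ t in (0:ℝ)..1, (qP (ℓ+1)).eval t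
    = (2*(ℓ:ℝ)+1) * ∫ t in (0:ℝ)..1, (qP ℓ).eval t := by
  have h := congrArg (fun p : ℝ[X] => ∫ t in (0:ℝ)..1, p.eval t) (cid2 ℓ)
  simp only [eval_mul, eval_add, eval_sub, eval_X, eval_natCast] at h
  have hsplit : (fun t : ℝ => t * (eval t (derivative (qP (ℓ+1))) + eval t (derivative (qP ℓ))))
      = fun t => t * eval t (derivative (qP (ℓ+1))) + t * eval t (derivative (qP ℓ)) := by
    funext t; ring
  rw [hsplit, intervalIntegral.integral_add (intX2mul _ 0 1) (intX2mul _ 0 1),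
    intervalIntegral.integral_const_mul, intervalIntegral.integral_sub (pInt _ 0 1) (pInt _ 0 1),
    ibp, ibp, qP_eval1, qP_eval1] at h
  push_cast at h
  rcases Nat.even_or_odd ℓ with he | ho
  · rw [he.neg_one_pow, (Even.add_one he).neg_one_pow] at h
    linarith
  · rw [ho.neg_one_pow, (Odd.add_one ho).neg_one_pow] at h
    linarith

theorem Mval (ℓ : ℕ) : ∫ t in (0:ℝ)..1, (qP ℓ).eval t = 1/(2*(ℓ:ℝ)+1) := by
  induction ℓ with
  | zero => simp [qP_zero]
  | succ m ih =>
    have h := Mrec m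
    rw [ih] at h
    have h3 : (2*(m:ℝ)+3) ≠ 0 := by positivity
    have h1 : (2*(m:ℝ)+1) ≠ 0 := by positivity
    push_cast
    field_simp at h ⊢
    linarith

theorem Sval (m : ℕ) : ∫ t in (0:ℝ)..1, t^2 * (qP (m+1)).eval t
    = -1/((2*(m:ℝ)+1)*(2*(m:ℝ)+3)*(2*(m:ℝ)+5)) := by
  have pid : X * derivative (qP (m+2)) = X * derivative (qP m)
      - ((4*(2*m+3):ℕ):ℝ[X]) * (X^2 * qP (m+1)) := by
    rw [cid1]; ring
  have h := congrArg (fun p : ℝ[X] => ∫ t in (0:ℝ)..1, p.eval t) pid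
  simp only [eval_mul, eval_sub, eval_X, eval_natCast, eval_pow] at h
  rw [intervalIntegral.integral_sub (intX2mul _ 0 1)
      (show IntervalIntegrable (fun t : ℝ => ((4*(2*m+3):ℕ):ℝ) * (t^2 * (qP (m+1)).eval t)) MeasureTheory.volume 0 1 from
        (continuous_const.mul ((continuous_pow 2).mul (Polynomial.continuous _))).intervalIntegrable 0 1),
    intervalIntegral.integral_const_mul, ibp, ibp, qP_eval1, qP_eval1, Mval, Mval] at h
  rw [show ((-1:ℝ))^(m+2) = (-1)^m by rw [pow_add]; norm_num] at h
  push_cast at h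
  have h1 : (2*(m:ℝ)+1) ≠ 0 := by positivity
  have h3 : (2*(m:ℝ)+3) ≠ 0 := by positivity
  have h5 : (2*(m:ℝ)+5) ≠ 0 := by positivity
  field_simp at h ⊢
  nlinarith [h]

theorem S0 : ∫ t in (0:ℝ)..1, t^2 * (qP 0).eval t = 1/3 := by
  simp only [qP_zero, eval_one, mul_one]
  rw [integral_pow]
  norm_num

theorem legendreP0 : legendreP 0 = 1 := by simp [legendreP]

theorem Ival (m : ℕ) : ∫ z in (-1:ℝ)..1, (legendreP (m+1)).eval z = 0 := by
  have hrep : legendreP (m+1)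
      = derivative (C ((1:ℝ)/(2^(m+1)*(m+1).factorial)) * derivative^[m] (Rr (m+1))) := by
    rw [legendreP, smul_eq_C_mul,
      show derivative^[m+1] (((X:ℝ[X])^2-1)^(m+1)) = derivative (derivative^[m] (Rr (m+1))) from
        Function.iterate_succ_apply' _ _ _, derivative_C_mul]
  rw [hrep, pFTC]
  simp only [eval_mul, eval_C]
  rw [rr_eval (m+1) m (by omega) 1 (by norm_num), rr_eval (m+1) m (by omega) (-1) (by norm_num)]
  ring

theorem Jsub (ℓ : ℕ) : ∫ z in (-1:ℝ)..1, Real.sqrt ((1-z)/2) * (legendreP ℓ).eval z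
    = 4 * ∫ t in (0:ℝ)..1, t^2 * (qP ℓ).eval t := by
  set f : ℝ → ℝ := fun z => Real.sqrt ((1-z)/2) * (legendreP ℓ).eval z with hfdef
  have hf : Continuous f := (Real.continuous_sqrt.comp (by continuity)).mul (Polynomial.continuous _)
  have hg : ∀ x ∈ Set.uIcc (0:ℝ) 1, HasDerivAt (fun t : ℝ => 1 - 2*t^2) (-(4*x)) x := by
    intro x _
    have h : HasDerivAt (fun t : ℝ => 1 - 2*t^2) (0 - 2*(((2:ℕ):ℝ) * x^(2-1))) x :=
      (hasDerivAt_const x (1:ℝ)).sub (((hasDerivAt_pow 2 x)).const_mul 2)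
    convert h using 1
    norm_num
    ring
  have hsub := intervalIntegral.integral_comp_smul_deriv hg ((continuous_const.mul continuous_id).neg.continuousOn) hf
  have hval : ∀ x ∈ Set.uIcc (0:ℝ) 1,
      (-(4*x)) • ((f ∘ fun t : ℝ => 1 - 2*t^2) x) = -4 * (x^2 * (qP ℓ).eval x) := by
    intro x hx
    rw [Set.uIcc_of_le (by norm_num : (0:ℝ) ≤ 1)] at hx
    have h1 : ((1:ℝ) - (1 - 2*x^2))/2 = x^2 := by ring
    have h2 : Real.sqrt (x^2) = x := by
      rw [Real.sqrt_sq hx.1]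
    have h3 : (qP ℓ).eval x = (legendreP ℓ).eval (1 - 2*x^2) := by
      rw [qP, eval_comp]
      norm_num
    simp only [Function.comp, hfdef, smul_eq_mul, h1, h2, h3]
    ring
  rw [intervalIntegral.integral_congr hval] at hsub
  have hends : ∫ u in (1 - 2*(0:ℝ)^2)..(1 - 2*(1:ℝ)^2), f u = - ∫ z in (-1:ℝ)..1, f z := by
    norm_num
    rw [intervalIntegral.integral_symm]
  rw [hends] at hsub
  have hconst : ∫ x in (0:ℝ)..1, -4 * (x^2 * (qP ℓ).eval x)
      = -4 * ∫ x in (0:ℝ)..1, x^2 * (qP ℓ).eval x := intervalIntegral.integral_const_mul _ _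
  rw [hconst] at hsub
  linarith


/-- Eigenvalues of the Lebedev kernel: for `η > 0`, the quantity
`λ_ℓ(η) = 2π ∫_{-1}^{1} k_η(z) P_ℓ(z) dz` equals `1` for `ℓ = 0` and
`η/((4ℓ²-1)(2ℓ+3))` for `ℓ ≥ 1`; in particular `λ_ℓ(η) > 0` for all `ℓ`. -/
theorem lebedev_eigenvalues (η : ℝ) (hη : 0 < η) (ℓ : ℕ) :
    (2 * Real.pi * ∫ z in (-1 : ℝ)..1, lebedevKernelFun η z * (legendreP ℓ).eval z)
        = (if ℓ = 0 then 1 else η / ((4 * (ℓ : ℝ) ^ 2 - 1) * (2 * (ℓ : ℝ) + 3))) ∧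
      0 < 2 * Real.pi * ∫ z in (-1 : ℝ)..1, lebedevKernelFun η z * (legendreP ℓ).eval z := by

  have hπ := Real.pi_ne_zero
  have hπ0 := Real.pi_pos
  have int1 : IntervalIntegrable (fun z => (1 / (4 * Real.pi) + η / (12 * Real.pi)) * (legendreP ℓ).eval z)
      MeasureTheory.volume (-1) 1 :=
    (continuous_const.mul (Polynomial.continuous _)).intervalIntegrable _ _
  have int2 : IntervalIntegrable (fun z => (η / (8 * Real.pi)) * (Real.sqrt ((1-z)/2) * (legendreP ℓ).eval z))
      MeasureTheory.volume (-1) 1 :=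
    (continuous_const.mul ((Real.continuous_sqrt.comp (by continuity)).mul
      (Polynomial.continuous _))).intervalIntegrable _ _
  have hsplit : ∫ z in (-1:ℝ)..1, lebedevKernelFun η z * (legendreP ℓ).eval z
      = (1 / (4 * Real.pi) + η / (12 * Real.pi)) * (∫ z in (-1:ℝ)..1, (legendreP ℓ).eval z)
        - (η / (8 * Real.pi)) * ∫ z in (-1:ℝ)..1, Real.sqrt ((1-z)/2) * (legendreP ℓ).eval z := by
    rw [← intervalIntegral.integral_const_mul, ← intervalIntegral.integral_const_mul,
      ← intervalIntegral.integral_sub int1 int2]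
    apply intervalIntegral.integral_congr
    intro z _
    simp only [lebedevKernelFun]
    ring
  cases ℓ with
  | zero =>
    have hI : ∫ z in (-1:ℝ)..1, (legendreP 0).eval z = 2 := by
      simp [legendreP0]
      norm_num
    have hval : (2 * Real.pi * ∫ z in (-1 : ℝ)..1, lebedevKernelFun η z * (legendreP 0).eval z) = 1 := by
      rw [hsplit, hI, Jsub 0, S0]
      field_simp
      ring
    rw [if_pos rfl]
    exact ⟨hval, by rw [hval]; norm_num⟩
  | succ m =>
    have hD1 : (0:ℝ) < 2*(m:ℝ)+1 := by positivity
    have hD3 : (0:ℝ) < 2*(m:ℝ)+3 := by positivity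
    have hD5 : (0:ℝ) < 2*(m:ℝ)+5 := by positivity
    have hval : (2 * Real.pi * ∫ z in (-1 : ℝ)..1, lebedevKernelFun η z * (legendreP (m+1)).eval z)
        = η / ((2*(m:ℝ)+1)*(2*(m:ℝ)+3)*(2*(m:ℝ)+5)) := by
      rw [hsplit, Ival m, Jsub (m+1), Sval m]
      field_simp
      ring
    have htarget : η / ((2*(m:ℝ)+1)*(2*(m:ℝ)+3)*(2*(m:ℝ)+5))
        = η / ((4 * ((m:ℝ)+1) ^ 2 - 1) * (2 * ((m:ℝ)+1) + 3)) := by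
      rw [show (4 * ((m:ℝ)+1) ^ 2 - 1) * (2 * ((m:ℝ)+1) + 3)
        = (2*(m:ℝ)+1)*(2*(m:ℝ)+3)*(2*(m:ℝ)+5) by ring]
    rw [if_neg (Nat.succ_ne_zero m)]
    constructor
    · rw [hval, htarget]
      push_cast
      ring
    · rw [hval]
      positivity
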